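/- In the spherical case with 0 < s0 < π/2, the function φ(s) = (∫₀^s sin(u)^{n-1} du)/sin(s)^{n-1} satisfies φ'(s) > cot(s)·φ(s) for all s in (0, s0]. -/

import Mathlib

open Real intervalIntegral Set

-- primitive F
noncomputable def Fm (m : ℕ) (s : ℝ) : ℝ := ∫ u in (0:ℝ)..s, Real.sin u ^ m

lemma hasDerivAt_Fm (m : ℕ) (s : ℝ) : HasDerivAt (Fm m) (Real.sin s ^ m) s := by
  have hc : Continuous fun u : ℝ => Real.sin u ^ m := (Real.continuous_sin.pow m)
  exact intervalIntegral.integral_hasDerivAt_right (hc.intervalIntegrable _ _)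
    (hc.stronglyMeasurableAtFilter _ _) hc.continuousAt

lemma Fm_pos (m : ℕ) {s : ℝ} (h0 : 0 < s) (hπ : s < Real.pi) : 0 < Fm m s := by
  apply intervalIntegral.intervalIntegral_pos_of_pos_on
    ((Real.continuous_sin.pow m).intervalIntegrable _ _)
  · intro x hx
    exact pow_pos (Real.sin_pos_of_pos_of_lt_pi hx.1 (hx.2.trans hπ)) m
  · exact h0

lemma key (m : ℕ) {s : ℝ} (h0 : 0 < s) (hπ : s < Real.pi / 2) :
    (m + 1 : ℝ) * Real.cos s * Fm m s < Real.sin s ^ (m + 1) := by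
  set h : ℝ → ℝ := fun x => Real.sin x ^ (m + 1) - (m + 1 : ℝ) * Real.cos x * Fm m x with hh
  have hd : ∀ x, HasDerivAt h ((m + 1 : ℝ) * Real.sin x * Fm m x) x := by
    intro x
    have h1 : HasDerivAt (fun x => Real.sin x ^ (m + 1))
        ((m + 1 : ℕ) * Real.sin x ^ m * Real.cos x) x := by
      simpa using (Real.hasDerivAt_sin x).fun_pow (m + 1)
    have h2 : HasDerivAt (fun x => (m + 1 : ℝ) * Real.cos x * Fm m x)
        ((m + 1 : ℝ) * (-Real.sin x) * Fm m x + ((m + 1 : ℝ) * Real.cos x) * Real.sin x ^ m) x := by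
      exact (((Real.hasDerivAt_cos x).const_mul ((m:ℝ)+1)).mul (hasDerivAt_Fm m x))
    have := h1.fun_sub h2
    refine this.congr_deriv ?_
    push_cast
    ring
  have hmono : StrictMonoOn h (Set.Icc 0 s) := by
    apply strictMonoOn_of_deriv_pos (convex_Icc 0 s)
      (fun x _ => ((hd x).differentiableAt.continuousAt.continuousWithinAt))
    intro x hx
    rw [interior_Icc] at hx
    rw [(hd x).deriv]
    have hs : 0 < Real.sin x := Real.sin_pos_of_pos_of_lt_pi hx.1
      ((hx.2.trans hπ).trans (by linarith [Real.pi_pos]))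
    have hF : 0 < Fm m x := Fm_pos m hx.1 ((hx.2.trans hπ).trans (by linarith [Real.pi_pos]))
    positivity
  have := hmono (Set.left_mem_Icc.2 h0.le) (Set.right_mem_Icc.2 h0.le) h0
  simp only [hh, Real.sin_zero, Real.cos_zero] at this
  have hF0 : Fm m 0 = 0 := by simp [Fm]
  rw [hF0] at this
  simp at this
  linarith
theorem stmt16 (n : ℕ) (hn : 2 ≤ n) (s0 : ℝ) (hs0 : 0 < s0) (hs0' : s0 < Real.pi / 2)
    (φ : ℝ → ℝ)
    (hφ : ∀ s > (0:ℝ), φ s = (∫ u in (0:ℝ)..s, Real.sin u ^ (n - 1)) / Real.sin s ^ (n - 1)) :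
    ∀ s ∈ Set.Ioc (0:ℝ) s0, (Real.cos s / Real.sin s) * φ s < deriv φ s := by
  obtain ⟨k, hk⟩ : ∃ k, n - 1 = k + 1 := ⟨n - 2, by omega⟩
  set m := n - 1 with hm
  intro s hs
  obtain ⟨h0, hle⟩ := hs
  have hsπ2 : s < Real.pi / 2 := lt_of_le_of_lt hle hs0'
  have hsπ : s < Real.pi := hsπ2.trans (by linarith [Real.pi_pos])
  have hS : 0 < Real.sin s := Real.sin_pos_of_pos_of_lt_pi h0 hsπ
  have hSm : Real.sin s ^ m ≠ 0 := pow_ne_zero _ hS.ne'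
  set g : ℝ → ℝ := fun x => Fm m x / Real.sin x ^ m with hg
  have heq : φ =ᶠ[nhds s] g :=
    Filter.eventuallyEq_of_mem (Ioi_mem_nhds h0) (fun x hx => hφ x hx)
  have hder : HasDerivAt g
      ((Real.sin s ^ m * Real.sin s ^ m - Fm m s * ((m : ℝ) * Real.sin s ^ (m - 1) * Real.cos s))
        / (Real.sin s ^ m) ^ 2) s := by
    have hpow : HasDerivAt (fun x => Real.sin x ^ m)
        ((m : ℝ) * Real.sin s ^ (m - 1) * Real.cos s) s := by
      simpa using (Real.hasDerivAt_sin s).fun_pow m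
    exact (hasDerivAt_Fm m s).div hpow hSm
  rw [heq.deriv_eq, hder.deriv]
  set F := Fm m s with hF
  set c := Real.cos s * F / Real.sin s ^ (m + 1) with hc
  have hkey : ((m : ℝ) + 1) * c < 1 := by
    rw [hc, show ((m:ℝ)+1) * (Real.cos s * F / Real.sin s ^ (m+1))
      = ((m:ℝ)+1) * Real.cos s * F / Real.sin s ^ (m+1) by ring,
      div_lt_one (pow_pos hS _)]
    exact key m h0 hsπ2
  have hL : Real.cos s / Real.sin s * (F / Real.sin s ^ m) = c := by
    rw [hc, div_mul_div_comm, ← pow_succ']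
  have hR : (Real.sin s ^ m * Real.sin s ^ m - F * ((m : ℝ) * Real.sin s ^ (m - 1) * Real.cos s))
      / (Real.sin s ^ m) ^ 2 = 1 - (m : ℝ) * c := by
    rw [hc, hk]
    simp only [Nat.add_sub_cancel]
    field_simp
    ring
  rw [hφ s h0, show (∫ u in (0:ℝ)..s, Real.sin u ^ m) = F from rfl, hL, hR]
  linarith
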